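/- Let a, b, p, q be positive real numbers and x ∈ (0,1). Then the generalized polylogarithm satisfies the Turán-type inequality Φ_{p,q}(a,b;x) · Φ_{p,q+2}(a,b;x) − Φ_{p,q+1}(a,b;x)^2 ≥ 0. -/

import Mathlib

/-- The generalized polylogarithm with real parameters. -/
noncomputable def genPolylogR (p q a b x : ℝ) : ℝ :=
  ∑' k : ℕ, ((1 + a) ^ p * (1 + b) ^ q /
      (((k : ℝ) + 1 + a) ^ p * ((k : ℝ) + 1 + b) ^ q)) * x ^ (k + 1)

theorem generalized_polylog_turan_q
    (a b p q : ℝ) (ha : 0 < a) (hb : 0 < b) (hp : 0 < p) (hq : 0 < q)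
    (x : ℝ) (hx : x ∈ Set.Ioo (0 : ℝ) 1) :
    0 ≤ genPolylogR p q a b x * genPolylogR p (q + 2) a b x -
          (genPolylogR p (q + 1) a b x) ^ 2 := by
  obtain ⟨hx0, hx1⟩ := hx
  set F : ℝ → ℕ → ℝ := fun s k => ((1 + a) ^ p * (1 + b) ^ s /
      (((k : ℝ) + 1 + a) ^ p * ((k : ℝ) + 1 + b) ^ s)) * x ^ (k + 1) with hF
  have hEq : ∀ s, genPolylogR p s a b x = ∑' k, F s k := fun s => rfl
  have ha1 : (0:ℝ) < 1 + a := by linarith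
  have hb1 : (0:ℝ) < 1 + b := by linarith
  have hak : ∀ k : ℕ, (0:ℝ) < (k : ℝ) + 1 + a := fun k => by positivity
  have hbk : ∀ k : ℕ, (0:ℝ) < (k : ℝ) + 1 + b := fun k => by positivity
  have hpos : ∀ s k, 0 < F s k := by
    intro s k
    have h1 := Real.rpow_pos_of_pos ha1 p
    have h2 := Real.rpow_pos_of_pos hb1 s
    have h3 := Real.rpow_pos_of_pos (hak k) p
    have h4 := Real.rpow_pos_of_pos (hbk k) s
    have h5 : (0:ℝ) < x ^ (k + 1) := pow_pos hx0 _
    simp only [hF]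
    positivity
  have hsum : ∀ s, 0 ≤ s → Summable (F s) := by
    intro s hs
    refine Summable.of_nonneg_of_le (fun k => (hpos s k).le) (fun k => ?_)
      ((summable_geometric_of_lt_one hx0.le hx1).mul_left x)
    have h1 : (1 + a) ^ p ≤ ((k : ℝ) + 1 + a) ^ p :=
      Real.rpow_le_rpow ha1.le (by linarith [Nat.cast_nonneg (α := ℝ) k]) hp.le
    have h2 : (1 + b) ^ s ≤ ((k : ℝ) + 1 + b) ^ s :=
      Real.rpow_le_rpow hb1.le (by linarith [Nat.cast_nonneg (α := ℝ) k]) hs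
    have h3 : (1 + a) ^ p * (1 + b) ^ s /
        (((k : ℝ) + 1 + a) ^ p * ((k : ℝ) + 1 + b) ^ s) ≤ 1 := by
      rw [div_le_one (by positivity)]
      exact mul_le_mul h1 h2 (Real.rpow_pos_of_pos hb1 s).le
        (Real.rpow_pos_of_pos (hak k) p).le
    calc F s k ≤ 1 * x ^ (k + 1) := by
          simp only [hF]
          exact mul_le_mul_of_nonneg_right h3 (pow_pos hx0 _).le
      _ = x * x ^ k := by ring
  -- rewrite F s k as c k * (r k) ^ s
  set c : ℕ → ℝ := fun k => (1 + a) ^ p / ((k : ℝ) + 1 + a) ^ p * x ^ (k + 1) with hc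
  set r : ℕ → ℝ := fun k => (1 + b) / ((k : ℝ) + 1 + b) with hr
  have hrpos : ∀ k, 0 < r k := fun k => div_pos hb1 (hbk k)
  have hFG : ∀ s k, F s k = c k * r k ^ s := by
    intro s k
    simp only [hF, hc, hr, Real.div_rpow hb1.le (hbk k).le]
    field_simp
  have key : ∀ k, F (q + 1) k ^ 2 = F q k * F (q + 2) k := by
    intro k
    rw [hFG, hFG, hFG]
    calc (c k * r k ^ (q + 1)) ^ 2 = c k ^ 2 * (r k ^ (q + 1) * r k ^ (q + 1)) := by ring
      _ = c k ^ 2 * r k ^ ((q + 1) + (q + 1)) := by rw [← Real.rpow_add (hrpos k)]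
      _ = c k ^ 2 * r k ^ (q + (q + 2)) := by ring_nf
      _ = c k ^ 2 * (r k ^ q * r k ^ (q + 2)) := by rw [Real.rpow_add (hrpos k)]
      _ = c k * r k ^ q * (c k * r k ^ (q + 2)) := by ring
  have hsum1 := hsum q hq.le
  have hsum2 := hsum (q + 2) (by linarith)
  have hsum3 := hsum (q + 1) (by linarith)
  have hbound : ∀ n, (∑ k ∈ Finset.range n, F (q + 1) k) ^ 2 ≤
      (∑' k, F q k) * (∑' k, F (q + 2) k) := by
    intro n
    calc (∑ k ∈ Finset.range n, F (q + 1) k) ^ 2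
        ≤ (∑ k ∈ Finset.range n, F q k) * (∑ k ∈ Finset.range n, F (q + 2) k) :=
          Finset.sum_sq_le_sum_mul_sum_of_sq_eq_mul _ (fun i _ => (hpos q i).le)
            (fun i _ => (hpos (q + 2) i).le) (fun i _ => key i)
      _ ≤ (∑' k, F q k) * (∑' k, F (q + 2) k) := by
          have h1 := Summable.sum_le_tsum (Finset.range n) (fun i _ => (hpos q i).le) hsum1
          have h2 := Summable.sum_le_tsum (Finset.range n) (fun i _ => (hpos (q + 2) i).le) hsum2
          exact mul_le_mul h1 h2 (Finset.sum_nonneg fun i _ => (hpos (q + 2) i).le)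
            (tsum_nonneg fun i => (hpos q i).le)
  have htend : Filter.Tendsto (fun n => (∑ k ∈ Finset.range n, F (q + 1) k) ^ 2)
      Filter.atTop (nhds ((∑' k, F (q + 1) k) ^ 2)) :=
    hsum3.hasSum.tendsto_sum_nat.pow 2
  have hfin : (∑' k, F (q + 1) k) ^ 2 ≤ (∑' k, F q k) * (∑' k, F (q + 2) k) :=
    le_of_tendsto htend (Filter.Eventually.of_forall hbound)
  rw [hEq, hEq, hEq]
  linarith
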